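/- Let M ∈ ℝ^{p×p}, let X, X' be i.i.d. random vectors in ℝ^p, and let T = E[sign(X−X')sign(X−X')ᵀ] with all entries of sign(X−X') in {−1,1}. Let Σ_{h₁} := Var(h₁(X)), where h₁(X) = E[sign(X−X')⊗sign(X−X') | X] ∈ ℝ^{p²}. Then for z = vec(M), zᵀΣ_{h₁}z ≤ λ_max(T)·(Σ_j ‖M_j‖₂)², where M_j is the j-th column of M. -/

import Mathlib

open MeasureTheory ProbabilityTheory Matrix Real

noncomputable def sgn (x : ℝ) : ℝ := if x < 0 then -1 else 1

noncomputable def h1 {Ω : Type*} [MeasurableSpace Ω] (μ : Measure Ω) {p : ℕ}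
    (X' : Ω → Fin p → ℝ) (x : Fin p → ℝ) (i j : Fin p) : ℝ :=
  ∫ ω, sgn (x i - X' ω i) * sgn (x j - X' ω j) ∂μ

lemma sgn_measurable : Measurable sgn :=
  Measurable.ite (measurableSet_lt measurable_id measurable_const) measurable_const
    measurable_const

lemma abs_sgn (x : ℝ) : |sgn x| = 1 := by unfold sgn; split <;> simp

lemma sgn_mul_self (x : ℝ) : sgn x * sgn x = 1 := by unfold sgn; split <;> norm_num

lemma int_of_bdd {Ω : Type*} [MeasurableSpace Ω] {μ : Measure Ω} [IsFiniteMeasure μ]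
    {f : Ω → ℝ} (hf : AEStronglyMeasurable f μ) {C : ℝ} (h : ∀ ω, |f ω| ≤ C) :
    Integrable f μ :=
  (integrable_const C).mono' hf (ae_of_all _ fun ω => by simpa using h ω)

lemma expand_sq {Ω : Type*} [MeasurableSpace Ω] {μ : Measure Ω} [IsProbabilityMeasure μ]
    {f : Ω → ℝ} (hf : AEStronglyMeasurable f μ) {C : ℝ} (hb : ∀ ω, |f ω| ≤ C) (c : ℝ) :
    ∫ ω, (f ω - c) ^ 2 ∂μ = (∫ ω, f ω ^ 2 ∂μ) - 2 * c * (∫ ω, f ω ∂μ) + c ^ 2 := by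
  have h1 : Integrable f μ := int_of_bdd hf hb
  have hsq : AEStronglyMeasurable (fun ω => f ω ^ 2) μ := by
    simpa [sq, Pi.mul_def] using hf.mul hf
  have h2 : Integrable (fun ω => f ω ^ 2) μ := by
    refine int_of_bdd hsq (C := C ^ 2) fun ω => ?_
    rw [abs_pow]
    exact pow_le_pow_left₀ (abs_nonneg _) (hb ω) 2
  have key : ∀ ω, (f ω - c) ^ 2 = f ω ^ 2 - 2 * c * f ω + c ^ 2 := fun ω => by ring
  simp_rw [key]
  calc ∫ ω, (f ω ^ 2 - 2 * c * f ω + c ^ 2) ∂μ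
      = (∫ ω, (f ω ^ 2 - 2 * c * f ω) ∂μ) + ∫ _ω, (c ^ 2 : ℝ) ∂μ :=
        integral_add (h2.sub (h1.const_mul _)) (integrable_const _)
    _ = ((∫ ω, f ω ^ 2 ∂μ) - ∫ ω, 2 * c * f ω ∂μ) + c ^ 2 := by
        rw [integral_sub h2 (h1.const_mul _), integral_const]; simp
    _ = _ := by rw [MeasureTheory.integral_const_mul]

lemma sq_int_le {Ω : Type*} [MeasurableSpace Ω] {μ : Measure Ω} [IsProbabilityMeasure μ]
    {f : Ω → ℝ} (hf : AEStronglyMeasurable f μ) {C : ℝ} (hb : ∀ ω, |f ω| ≤ C) :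
    (∫ ω, f ω ∂μ) ^ 2 ≤ ∫ ω, f ω ^ 2 ∂μ := by
  have h := expand_sq hf hb (∫ ω, f ω ∂μ)
  have h0 : (0:ℝ) ≤ ∫ ω, (f ω - ∫ ω, f ω ∂μ) ^ 2 ∂μ := integral_nonneg fun ω => sq_nonneg _
  nlinarith [h, h0]

lemma cs_int {Ω : Type*} [MeasurableSpace Ω] {μ : Measure Ω} [IsProbabilityMeasure μ]
    {u v : Ω → ℝ} (hu : AEStronglyMeasurable u μ) (hv : AEStronglyMeasurable v μ)
    {Cu Cv : ℝ} (hbu : ∀ ω, |u ω| ≤ Cu) (hbv : ∀ ω, |v ω| ≤ Cv) :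
    ∫ ω, |u ω * v ω| ∂μ ≤
      Real.sqrt (∫ ω, u ω ^ 2 ∂μ) * Real.sqrt (∫ ω, v ω ^ 2 ∂μ) := by
  have hpq : Real.HolderConjugate 2 2 := Real.HolderConjugate.two_two
  have hu2 : MemLp u (ENNReal.ofReal 2) μ :=
    MemLp.of_bound hu Cu (ae_of_all _ fun ω => by simpa using hbu ω)
  have hv2 : MemLp v (ENNReal.ofReal 2) μ :=
    MemLp.of_bound hv Cv (ae_of_all _ fun ω => by simpa using hbv ω)
  have e : ∀ w : Ω → ℝ, (∫ ω, ‖w ω‖ ^ (2:ℝ) ∂μ) ^ (1/(2:ℝ)) =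
      Real.sqrt (∫ ω, w ω ^ 2 ∂μ) := by
    intro w
    rw [Real.sqrt_eq_rpow]
    congr 1
    refine integral_congr_ae (ae_of_all _ fun ω => ?_)
    show ‖w ω‖ ^ (2:ℝ) = w ω ^ 2
    rw [show ((2:ℝ)) = ((2:ℕ):ℝ) by norm_num, Real.rpow_natCast]
    simp [Real.norm_eq_abs, sq_abs]
  calc ∫ ω, |u ω * v ω| ∂μ = ∫ ω, ‖u ω‖ * ‖v ω‖ ∂μ := by
        simp [abs_mul, Real.norm_eq_abs]
    _ ≤ (∫ ω, ‖u ω‖ ^ (2:ℝ) ∂μ) ^ (1/(2:ℝ)) * (∫ ω, ‖v ω‖ ^ (2:ℝ) ∂μ) ^ (1/(2:ℝ)) :=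
        integral_mul_norm_le_Lp_mul_Lq hpq hu2 hv2
    _ = _ := by rw [e, e]

/-- The bilinear sign form `sᵀ M s`. -/
noncomputable def Fq {p : ℕ} (M : Matrix (Fin p) (Fin p) ℝ)
    (q : (Fin p → ℝ) × (Fin p → ℝ)) : ℝ :=
  ∑ i, ∑ j, M i j * (sgn (q.1 i - q.2 i) * sgn (q.1 j - q.2 j))

/-- The column form `c_j = sᵀ M_j`. -/
noncomputable def cj {p : ℕ} (M : Matrix (Fin p) (Fin p) ℝ) (j : Fin p)
    (q : (Fin p → ℝ) × (Fin p → ℝ)) : ℝ :=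
  ∑ i, M i j * sgn (q.1 i - q.2 i)

lemma sgn_coord_meas {p : ℕ} (i : Fin p) :
    Measurable fun q : (Fin p → ℝ) × (Fin p → ℝ) => sgn (q.1 i - q.2 i) :=
  sgn_measurable.comp (((measurable_pi_apply i).comp measurable_fst).sub
    ((measurable_pi_apply i).comp measurable_snd))

lemma Fq_meas {p : ℕ} (M : Matrix (Fin p) (Fin p) ℝ) : Measurable (Fq M) := by
  refine Finset.measurable_sum _ fun i _ => Finset.measurable_sum _ fun j _ => ?_
  exact measurable_const.mul ((sgn_coord_meas i).mul (sgn_coord_meas j))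

lemma Fq_bdd {p : ℕ} (M : Matrix (Fin p) (Fin p) ℝ) (q : (Fin p → ℝ) × (Fin p → ℝ)) :
    |Fq M q| ≤ ∑ i, ∑ j, |M i j| := by
  calc |Fq M q| ≤ ∑ i, |∑ j, M i j * (sgn (q.1 i - q.2 i) * sgn (q.1 j - q.2 j))| :=
        Finset.abs_sum_le_sum_abs _ _
    _ ≤ ∑ i, ∑ j, |M i j * (sgn (q.1 i - q.2 i) * sgn (q.1 j - q.2 j))| := by
        gcongr with i _; exact Finset.abs_sum_le_sum_abs _ _
    _ = ∑ i, ∑ j, |M i j| := by simp [abs_mul, abs_sgn]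

lemma cj_meas {p : ℕ} (M : Matrix (Fin p) (Fin p) ℝ) (j : Fin p) : Measurable (cj M j) :=
  Finset.measurable_sum _ fun i _ => measurable_const.mul (sgn_coord_meas i)

lemma cj_bdd {p : ℕ} (M : Matrix (Fin p) (Fin p) ℝ) (j : Fin p)
    (q : (Fin p → ℝ) × (Fin p → ℝ)) : |cj M j q| ≤ ∑ i, |M i j| := by
  calc |cj M j q| ≤ ∑ i, |M i j * sgn (q.1 i - q.2 i)| := Finset.abs_sum_le_sum_abs _ _
    _ = ∑ i, |M i j| := by simp [abs_mul, abs_sgn]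

lemma Fq_sq_le {p : ℕ} (M : Matrix (Fin p) (Fin p) ℝ) (q : (Fin p → ℝ) × (Fin p → ℝ)) :
    Fq M q ^ 2 ≤ (∑ j, |cj M j q|) ^ 2 := by
  have hFq : Fq M q = ∑ j, cj M j q * sgn (q.1 j - q.2 j) := by
    rw [Fq, Finset.sum_comm]
    refine Finset.sum_congr rfl fun j _ => ?_
    rw [cj, Finset.sum_mul]
    exact Finset.sum_congr rfl fun i _ => by ring
  have habs : |Fq M q| ≤ ∑ j, |cj M j q| := by
    rw [hFq]
    calc |∑ j, cj M j q * sgn (q.1 j - q.2 j)| ≤ ∑ j, |cj M j q * sgn (q.1 j - q.2 j)| :=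
          Finset.abs_sum_le_sum_abs _ _
      _ = ∑ j, |cj M j q| := by simp [abs_mul, abs_sgn]
  calc Fq M q ^ 2 = |Fq M q| ^ 2 := (sq_abs _).symm
    _ ≤ (∑ j, |cj M j q|) ^ 2 := pow_le_pow_left₀ (abs_nonneg _) habs 2

theorem stmt14 {Ω : Type*} [MeasurableSpace Ω] (μ : Measure Ω) [IsProbabilityMeasure μ]
    (p : ℕ) (M : Matrix (Fin p) (Fin p) ℝ)
    (X X' : Ω → Fin p → ℝ) (hX : Measurable X) (hX' : Measurable X')
    (hindep : IndepFun X X' μ) (hid : IdentDistrib X X' μ μ)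
    (T : Matrix (Fin p) (Fin p) ℝ)
    (hT : ∀ i j, T i j = ∫ ω, sgn (X ω i - X' ω i) * sgn (X ω j - X' ω j) ∂μ)
    (tmax : ℝ)
    (htmax : ∀ z : Fin p → ℝ, z ⬝ᵥ T.mulVec z ≤ tmax * ∑ i, (z i) ^ 2) :
    (∫ ω, ((∑ i, ∑ j, M i j * h1 μ X' (X ω) i j)
          - ∫ ω', (∑ i, ∑ j, M i j * h1 μ X' (X ω') i j) ∂μ) ^ 2 ∂μ)
      ≤ tmax * (∑ j, Real.sqrt (∑ i, (M i j) ^ 2)) ^ 2 := by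
  classical
  rcases Nat.eq_zero_or_pos p with hp | hp
  · subst hp; simp
  -- tmax is nonnegative
  have htm0 : (0:ℝ) ≤ tmax := by
    have i0 : Fin p := ⟨0, hp⟩
    have h := htmax (Pi.single i0 1)
    have hT00 : T i0 i0 = 1 := by
      rw [hT]; simp_rw [sgn_mul_self]; simp
    have hdot : (Pi.single i0 1 : Fin p → ℝ) ⬝ᵥ T.mulVec (Pi.single i0 1) = T i0 i0 := by
      simp [dotProduct, Matrix.mulVec, Pi.single_apply, Finset.sum_ite_eq',
        mul_ite, ite_mul]
    have hsum : ∑ i, (Pi.single i0 1 : Fin p → ℝ) i ^ 2 = 1 := by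
      simp [Pi.single_apply, Finset.sum_ite_eq']
    rw [hdot, hT00, hsum, mul_one] at h
    linarith
  set CF : ℝ := ∑ i, ∑ j, |M i j| with hCF
  -- the conditional mean function g
  set g : (Fin p → ℝ) → ℝ := fun x => ∫ ω', Fq M (x, X' ω') ∂μ with hg
  have hgsm : StronglyMeasurable g :=
    StronglyMeasurable.integral_prod_right'
      (((Fq_meas M).comp (measurable_fst.prodMk (hX'.comp measurable_snd))).stronglyMeasurable)
  have hgb : ∀ x, |g x| ≤ CF := by
    intro x
    have := norm_integral_le_of_norm_le_const (μ := μ) (f := fun ω' => Fq M (x, X' ω'))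
      (C := CF) (ae_of_all _ fun ω' => by simpa using Fq_bdd M _)
    simpa using this
  -- identification of the summed h1 with g
  have hSG : ∀ x : Fin p → ℝ, (∑ i, ∑ j, M i j * h1 μ X' x i j) = g x := by
    intro x
    have hint : ∀ i j : Fin p, Integrable
        (fun ω' => M i j * (sgn (x i - X' ω' i) * sgn (x j - X' ω' j))) μ := by
      intro i j
      refine int_of_bdd ?_ (C := |M i j|) ?_
      · exact (measurable_const.mul
          ((sgn_measurable.comp (measurable_const.sub ((measurable_pi_apply i).comp hX'))).mul
           (sgn_measurable.comp (measurable_const.sub ((measurable_pi_apply j).comp hX'))))).aestronglyMeasurable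
      · intro ω'; rw [abs_mul, abs_mul, abs_sgn, abs_sgn]; simp
    rw [hg]
    show _ = ∫ ω', ∑ i, ∑ j, M i j * (sgn (x i - X' ω' i) * sgn (x j - X' ω' j)) ∂μ
    rw [integral_finset_sum _ fun i _ => integrable_finset_sum _ fun j _ => hint i j]
    refine Finset.sum_congr rfl fun i _ => ?_
    rw [integral_finset_sum _ fun j _ => hint i j]
    refine Finset.sum_congr rfl fun j _ => ?_
    rw [MeasureTheory.integral_const_mul, h1]
  simp only [hSG]
  have hGaesm : AEStronglyMeasurable (fun ω => g (X ω)) μ :=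
    (hgsm.comp_measurable hX).aestronglyMeasurable
  -- Step 1: variance is at most the second moment
  have step1 : ∫ ω, (g (X ω) - ∫ ω', g (X ω') ∂μ) ^ 2 ∂μ ≤ ∫ ω, g (X ω) ^ 2 ∂μ := by
    have h := expand_sq hGaesm (fun ω => hgb (X ω)) (∫ ω', g (X ω') ∂μ)
    nlinarith [h, sq_nonneg (∫ ω', g (X ω') ∂μ),
      integral_nonneg (μ := μ) (f := fun ω => (g (X ω) - ∫ ω', g (X ω') ∂μ) ^ 2)
        fun ω => sq_nonneg _]
  -- Step 2: Jensen pointwise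
  have hF2b : ∀ q, |Fq M q ^ 2| ≤ CF ^ 2 := fun q => by
    rw [abs_pow]; exact pow_le_pow_left₀ (abs_nonneg _) (Fq_bdd M q) 2
  have hHsm : StronglyMeasurable fun x : Fin p → ℝ => ∫ ω', Fq M (x, X' ω') ^ 2 ∂μ :=
    StronglyMeasurable.integral_prod_right'
      ((((Fq_meas M).comp (measurable_fst.prodMk (hX'.comp measurable_snd))).pow_const
        2).stronglyMeasurable)
  have step2 : ∫ ω, g (X ω) ^ 2 ∂μ ≤ ∫ ω, (∫ ω', Fq M (X ω, X' ω') ^ 2 ∂μ) ∂μ := by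
    refine integral_mono ?_ ?_ ?_
    · refine int_of_bdd (by simpa [sq, Pi.mul_def] using hGaesm.mul hGaesm) (C := CF ^ 2) fun ω => ?_
      rw [abs_pow]; exact pow_le_pow_left₀ (abs_nonneg _) (hgb _) 2
    · refine int_of_bdd (hHsm.comp_measurable hX).aestronglyMeasurable (C := CF ^ 2) fun ω => ?_
      have := norm_integral_le_of_norm_le_const (μ := μ)
        (f := fun ω' => Fq M (X ω, X' ω') ^ 2) (C := CF ^ 2)
        (ae_of_all _ fun ω' => by simpa using hF2b _)
      simpa using this
    · intro ω
      show g (X ω) ^ 2 ≤ _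
      rw [hg]
      exact sq_int_le (((Fq_meas M).comp (measurable_const.prodMk hX')).aestronglyMeasurable)
        (fun ω' => Fq_bdd M _)
  -- Step 3: collapse the double integral using independence
  have hPX : IsProbabilityMeasure (Measure.map X μ) := Measure.isProbabilityMeasure_map hX.aemeasurable
  have hPX' : IsProbabilityMeasure (Measure.map X' μ) := Measure.isProbabilityMeasure_map hX'.aemeasurable
  have hmap : Measure.map (fun ω => (X ω, X' ω)) μ = (Measure.map X μ).prod (Measure.map X' μ) :=
    (indepFun_iff_map_prod_eq_prod_map_map hX.aemeasurable hX'.aemeasurable).mp hindep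
  have hFprod : Integrable (fun q => Fq M q ^ 2) ((Measure.map X μ).prod (Measure.map X' μ)) :=
    int_of_bdd ((Fq_meas M).pow_const 2).aestronglyMeasurable hF2b
  have step3 : ∫ ω, (∫ ω', Fq M (X ω, X' ω') ^ 2 ∂μ) ∂μ = ∫ ω, Fq M (X ω, X' ω) ^ 2 ∂μ := by
    have e1 : ∀ ω, (∫ ω', Fq M (X ω, X' ω') ^ 2 ∂μ)
        = ∫ y, Fq M (X ω, y) ^ 2 ∂(Measure.map X' μ) := fun ω =>
      (integral_map hX'.aemeasurable
        (((Fq_meas M).comp (measurable_const.prodMk measurable_id)).pow_const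
          2).aestronglyMeasurable).symm
    have e2 : ∫ ω, (∫ y, Fq M (X ω, y) ^ 2 ∂(Measure.map X' μ)) ∂μ
        = ∫ x, (∫ y, Fq M (x, y) ^ 2 ∂(Measure.map X' μ)) ∂(Measure.map X μ) :=
      (integral_map hX.aemeasurable
        (StronglyMeasurable.integral_prod_right'
          (((Fq_meas M).pow_const 2).stronglyMeasurable)).aestronglyMeasurable).symm
    have e3 : ∫ x, (∫ y, Fq M (x, y) ^ 2 ∂(Measure.map X' μ)) ∂(Measure.map X μ)
        = ∫ q, Fq M q ^ 2 ∂((Measure.map X μ).prod (Measure.map X' μ)) :=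
      (integral_prod _ hFprod).symm
    have e4 : ∫ q, Fq M q ^ 2 ∂((Measure.map X μ).prod (Measure.map X' μ))
        = ∫ ω, Fq M (X ω, X' ω) ^ 2 ∂μ := by
      rw [← hmap]
      exact integral_map (hX.aemeasurable.prodMk hX'.aemeasurable)
        ((Fq_meas M).pow_const 2).aestronglyMeasurable
    calc ∫ ω, (∫ ω', Fq M (X ω, X' ω') ^ 2 ∂μ) ∂μ
        = ∫ ω, (∫ y, Fq M (X ω, y) ^ 2 ∂(Measure.map X' μ)) ∂μ := by simp_rw [e1]
      _ = _ := by rw [e2, e3, e4]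
  -- Step 4: bound the second moment of the sign form
  have hWc : ∀ j, AEStronglyMeasurable (fun ω => cj M j (X ω, X' ω)) μ := fun j =>
    ((cj_meas M j).comp (hX.prodMk hX')).aestronglyMeasurable
  have hcsq : ∀ j, ∫ ω, cj M j (X ω, X' ω) ^ 2 ∂μ ≤ tmax * ∑ i, M i j ^ 2 := by
    intro j
    have hexp : ∀ ω, cj M j (X ω, X' ω) ^ 2 =
        ∑ i, ∑ i', (M i j * M i' j) * (sgn (X ω i - X' ω i) * sgn (X ω i' - X' ω i')) := by
      intro ω
      rw [cj, sq, Finset.sum_mul_sum]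
      exact Finset.sum_congr rfl fun i _ => Finset.sum_congr rfl fun i' _ => by ring
    have hint : ∀ i i' : Fin p, Integrable
        (fun ω => (M i j * M i' j) * (sgn (X ω i - X' ω i) * sgn (X ω i' - X' ω i'))) μ := by
      intro i i'
      refine int_of_bdd ?_ (C := |M i j * M i' j|) ?_
      · exact (measurable_const.mul
          ((sgn_measurable.comp (((measurable_pi_apply i).comp hX).sub
             ((measurable_pi_apply i).comp hX'))).mul
           (sgn_measurable.comp (((measurable_pi_apply i').comp hX).sub
             ((measurable_pi_apply i').comp hX'))))).aestronglyMeasurable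
      · intro ω; simp [abs_mul, abs_sgn]
    have heq1 : ∫ ω, cj M j (X ω, X' ω) ^ 2 ∂μ = ∑ i, ∑ i', (M i j * M i' j) * T i i' := by
      simp_rw [hexp]
      rw [integral_finset_sum _ fun i _ => integrable_finset_sum _ fun i' _ => hint i i']
      refine Finset.sum_congr rfl fun i _ => ?_
      rw [integral_finset_sum _ fun i' _ => hint i i']
      refine Finset.sum_congr rfl fun i' _ => ?_
      rw [MeasureTheory.integral_const_mul, hT]
    have heq2 : ∑ i, ∑ i', (M i j * M i' j) * T i i'
        = (fun i => M i j) ⬝ᵥ T.mulVec (fun i => M i j) := by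
      simp only [dotProduct, Matrix.mulVec]
      simp_rw [Finset.mul_sum]
      exact Finset.sum_congr rfl fun i _ => Finset.sum_congr rfl fun i' _ => by ring
    rw [heq1, heq2]
    exact htmax _
  have step4 : ∫ ω, Fq M (X ω, X' ω) ^ 2 ∂μ
      ≤ tmax * (∑ j, Real.sqrt (∑ i, M i j ^ 2)) ^ 2 := by
    have habsint : ∀ j k : Fin p, Integrable
        (fun ω => |cj M j (X ω, X' ω)| * |cj M k (X ω, X' ω)|) μ := by
      intro j k
      refine int_of_bdd ((((cj_meas M j).comp (hX.prodMk hX')).abs.mul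
          ((cj_meas M k).comp (hX.prodMk hX')).abs)).aestronglyMeasurable
        (C := (∑ i, |M i j|) * ∑ i, |M i k|)
        fun ω => ?_
      rw [abs_mul, abs_abs, abs_abs]
      exact mul_le_mul (cj_bdd M j _) (cj_bdd M k _) (abs_nonneg _)
        (le_trans (abs_nonneg _) (cj_bdd M j (X ω, X' ω)))
    have hA : ∫ ω, Fq M (X ω, X' ω) ^ 2 ∂μ ≤ ∫ ω, (∑ j, |cj M j (X ω, X' ω)|) ^ 2 ∂μ := by
      refine integral_mono ?_ ?_ fun ω => Fq_sq_le M _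
      · exact int_of_bdd (((Fq_meas M).pow_const 2).comp (hX.prodMk hX')).aestronglyMeasurable
          (C := CF ^ 2) fun ω => hF2b _
      · refine int_of_bdd ?_ (C := (∑ j, (∑ i, |M i j|)) ^ 2) fun ω => ?_
        · exact ((Finset.measurable_sum _ fun j _ => ((cj_meas M j).comp
            (hX.prodMk hX')).abs).pow_const 2).aestronglyMeasurable
        · rw [abs_pow]
          refine pow_le_pow_left₀ (abs_nonneg _) ?_ 2
          rw [abs_of_nonneg (Finset.sum_nonneg fun j _ => abs_nonneg _)]
          exact Finset.sum_le_sum fun j _ => by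
            simpa [abs_abs] using cj_bdd M j (X ω, X' ω)
    have hB : ∫ ω, (∑ j, |cj M j (X ω, X' ω)|) ^ 2 ∂μ
        = ∑ j, ∑ k, ∫ ω, |cj M j (X ω, X' ω)| * |cj M k (X ω, X' ω)| ∂μ := by
      have hpt : ∀ ω, (∑ j, |cj M j (X ω, X' ω)|) ^ 2
          = ∑ j, ∑ k, |cj M j (X ω, X' ω)| * |cj M k (X ω, X' ω)| := by
        intro ω; rw [sq, Finset.sum_mul_sum]
      simp_rw [hpt]
      rw [integral_finset_sum _ fun j _ => integrable_finset_sum _ fun k _ => habsint j k]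
      exact Finset.sum_congr rfl fun j _ => integral_finset_sum _ fun k _ => habsint j k
    have hC : ∑ j, ∑ k, ∫ ω, |cj M j (X ω, X' ω)| * |cj M k (X ω, X' ω)| ∂μ
        ≤ ∑ j, ∑ k, (Real.sqrt tmax * Real.sqrt (∑ i, M i j ^ 2))
            * (Real.sqrt tmax * Real.sqrt (∑ i, M i k ^ 2)) := by
      refine Finset.sum_le_sum fun j _ => Finset.sum_le_sum fun k _ => ?_
      have e : ∫ ω, |cj M j (X ω, X' ω)| * |cj M k (X ω, X' ω)| ∂μ
          = ∫ ω, |cj M j (X ω, X' ω) * cj M k (X ω, X' ω)| ∂μ := by simp_rw [abs_mul]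
      rw [e]
      refine (cs_int (hWc j) (hWc k) (fun ω => cj_bdd M j _) (fun ω => cj_bdd M k _)).trans ?_
      have hs : ∀ l : Fin p, Real.sqrt (∫ ω, cj M l (X ω, X' ω) ^ 2 ∂μ)
          ≤ Real.sqrt tmax * Real.sqrt (∑ i, M i l ^ 2) := by
        intro l
        rw [← Real.sqrt_mul htm0]
        exact Real.sqrt_le_sqrt (hcsq l)
      exact mul_le_mul (hs j) (hs k) (Real.sqrt_nonneg _)
        (mul_nonneg (Real.sqrt_nonneg _) (Real.sqrt_nonneg _))
    have hD : ∑ j, ∑ k, (Real.sqrt tmax * Real.sqrt (∑ i, M i j ^ 2))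
        * (Real.sqrt tmax * Real.sqrt (∑ i, M i k ^ 2))
        = tmax * (∑ j, Real.sqrt (∑ i, M i j ^ 2)) ^ 2 := by
      have hst : Real.sqrt tmax * Real.sqrt tmax = tmax := Real.mul_self_sqrt htm0
      have h1 : ∀ j k : Fin p, (Real.sqrt tmax * Real.sqrt (∑ i, M i j ^ 2))
          * (Real.sqrt tmax * Real.sqrt (∑ i, M i k ^ 2))
          = tmax * (Real.sqrt (∑ i, M i j ^ 2) * Real.sqrt (∑ i, M i k ^ 2)) := fun j k => by
        rw [mul_mul_mul_comm, hst]
      simp_rw [h1, sq, Finset.sum_mul_sum, Finset.mul_sum]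
    calc ∫ ω, Fq M (X ω, X' ω) ^ 2 ∂μ ≤ ∫ ω, (∑ j, |cj M j (X ω, X' ω)|) ^ 2 ∂μ := hA
      _ = _ := hB
      _ ≤ _ := hC
      _ = _ := hD
  calc ∫ ω, (g (X ω) - ∫ ω', g (X ω') ∂μ) ^ 2 ∂μ ≤ ∫ ω, g (X ω) ^ 2 ∂μ := step1
    _ ≤ ∫ ω, (∫ ω', Fq M (X ω, X' ω') ^ 2 ∂μ) ∂μ := step2
    _ = ∫ ω, Fq M (X ω, X' ω) ^ 2 ∂μ := step3
    _ ≤ _ := step4
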